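/- Let m, n be positive integers and h a norm on ℝ^m with generated norm H on ℝ^{m×n}. Then for every M ∈ ℝ^{m×n}, H(M) = inf { h(θ_1) + … + h(θ_k) : k ∈ ℕ, θ_1, …, θ_k ∈ ℝ^m, e_1, …, e_k ∈ ℝ^n unit vectors, M = θ_1 ⊗ e_1 + … + θ_k ⊗ e_k }. -/

import Mathlib

open MeasureTheory

noncomputable section

/-- `ℝ^n` with the Euclidean norm. -/
abbrev Euc (n : ℕ) := EuclideanSpace ℝ (Fin n)

/-- `h` is a norm on `ℝ^m`. -/
def IsNorm {m : ℕ} (h : (Fin m → ℝ) → ℝ) : Prop :=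
  (∀ x y, h (x + y) ≤ h x + h y) ∧ (∀ (c : ℝ) (x), h (c • x) = |c| * h x) ∧
    ∀ x, h x = 0 → x = 0

/-- The dual norm `h_*` of `h`: `h_*(g) = sup { g·θ : h θ ≤ 1 }`. -/
def dualNorm {m : ℕ} (h : (Fin m → ℝ) → ℝ) (g : Fin m → ℝ) : ℝ :=
  sSup {r | ∃ θ : Fin m → ℝ, h θ ≤ 1 ∧ r = ∑ i, g i * θ i}

/-- Matrix-vector product `M u`. -/
def matVec {m n : ℕ} (M : Fin m → Fin n → ℝ) (u : Euc n) : Fin m → ℝ :=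
  fun i => ∑ j, M i j * u j

/-- Frobenius inner product `M : N`. -/
def frob {m n : ℕ} (M N : Fin m → Fin n → ℝ) : ℝ := ∑ i, ∑ j, M i j * N i j

/-- `M ∈ ∂H(0)`, i.e. `h_*(M u) ≤ 1` for all `|u| ≤ 1`. -/
def inSubdiffH {m n : ℕ} (h : (Fin m → ℝ) → ℝ) (M : Fin m → Fin n → ℝ) : Prop :=
  ∀ u : Euc n, ‖u‖ ≤ 1 → dualNorm h (matVec M u) ≤ 1

/-- The norm `H` on `ℝ^{m×n}` generated by `h`:
`H(N) = sup { M:N : M ∈ ∂H(0) }`. -/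
def genNorm {m n : ℕ} (h : (Fin m → ℝ) → ℝ) (N : Fin m → Fin n → ℝ) : ℝ :=
  sSup {r | ∃ M : Fin m → Fin n → ℝ, inSubdiffH h M ∧ r = frob M N}

/-- The rank-one matrix `θ ⊗ e`. -/
def outer {m n : ℕ} (θ : Fin m → ℝ) (e : Euc n) : Fin m → Fin n → ℝ :=
  fun i j => θ i * e j

section lemmas
variable {m n : ℕ} {h : (Fin m → ℝ) → ℝ}

lemma h_zero (hh : IsNorm h) : h 0 = 0 := by
  have := hh.2.1 0 0
  simpa using this

lemma h_nonneg (hh : IsNorm h) (x : Fin m → ℝ) : 0 ≤ h x := by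
  have h1 := hh.1 x (-x)
  have h2 : h (-x) = h x := by
    have := hh.2.1 (-1) x
    simpa using this
  have h3 : h (x + -x) = 0 := by simpa using h_zero hh
  nlinarith

lemma h_neg (hh : IsNorm h) (x : Fin m → ℝ) : h (-x) = h x := by
  have := hh.2.1 (-1) x
  simpa using this

lemma h_sum_le (hh : IsNorm h) {ι : Type*} (s : Finset ι) (f : ι → Fin m → ℝ) :
    h (∑ i ∈ s, f i) ≤ ∑ i ∈ s, h (f i) := by
  classical
  induction s using Finset.induction with
  | empty => simp [h_zero hh]
  | @insert a s hx ih =>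
    rw [Finset.sum_insert hx, Finset.sum_insert hx]
    exact le_trans (hh.1 _ _) (by linarith)

lemma h_upper (hh : IsNorm h) :
    ∃ C : ℝ, 0 ≤ C ∧ ∀ x : Fin m → ℝ, h x ≤ C * ‖x‖ := by
  refine ⟨∑ i, h (Pi.single i 1), Finset.sum_nonneg fun i _ => h_nonneg hh _, fun x => ?_⟩
  have hx : x = ∑ i, Pi.single i (x i) := (Finset.univ_sum_single x).symm
  calc h x ≤ ∑ i, h (Pi.single i (x i)) := by
        conv_lhs => rw [hx]
        exact h_sum_le hh _ _
    _ ≤ ∑ i, ‖x‖ * h (Pi.single i 1) := by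
        apply Finset.sum_le_sum
        intro i _
        have : Pi.single i (x i) = (x i) • (Pi.single i (1:ℝ) : Fin m → ℝ) := by
          funext j; by_cases hj : j = i <;> simp [Pi.single_apply, hj]
        rw [this, hh.2.1]
        have h1 : |x i| ≤ ‖x‖ := by
          have := norm_le_pi_norm x i
          simpa using this
        exact mul_le_mul_of_nonneg_right h1 (h_nonneg hh _)
    _ = (∑ i, h (Pi.single i 1)) * ‖x‖ := by rw [Finset.sum_mul]; exact Finset.sum_congr rfl fun i _ => mul_comm _ _

lemma h_continuous (hh : IsNorm h) : Continuous h := by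
  obtain ⟨C, hC0, hC⟩ := h_upper hh
  refine (LipschitzWith.of_dist_le_mul (K := ⟨C, hC0⟩) (f := h) fun x y => ?_).continuous
  rw [Real.dist_eq, abs_sub_le_iff]
  have k1 : h x ≤ h y + h (x - y) := by
    have := hh.1 y (x - y); simpa using this
  have k2 : h y ≤ h x + h (y - x) := by
    have := hh.1 x (y - x); simpa using this
  have k3 : h (y - x) = h (x - y) := by
    rw [← h_neg hh (x - y)]; congr 1; abel
  have k4 : h (x - y) ≤ C * dist x y := by
    rw [dist_eq_norm]; exact hC _
  have k5 : h (x - y) ≤ C * dist y x := by rw [dist_comm]; exact k4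
  constructor <;> change _ ≤ C * dist x y <;> [linarith; linarith [dist_comm x y ▸ k4]]

end lemmas

lemma h_lower {m : ℕ} {h : (Fin m → ℝ) → ℝ} (hm : 0 < m) (hh : IsNorm h) :
    ∃ c : ℝ, 0 < c ∧ ∀ θ : Fin m → ℝ, c * ‖θ‖ ≤ h θ := by
  haveI : Nonempty (Fin m) := ⟨⟨0, hm⟩⟩
  have hsph : (Metric.sphere (0 : Fin m → ℝ) 1).Nonempty := by
    refine ⟨Pi.single ⟨0, hm⟩ 1, ?_⟩
    simp [Metric.mem_sphere, dist_zero_right, Pi.norm_single]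
  obtain ⟨θ0, hθ0mem, hθ0min⟩ :=
    (isCompact_sphere (0 : Fin m → ℝ) 1).exists_isMinOn hsph (h_continuous hh).continuousOn
  have hθ0norm : ‖θ0‖ = 1 := by simpa using hθ0mem
  have hc : 0 < h θ0 := by
    rcases lt_or_eq_of_le (h_nonneg hh θ0) with hlt | heq
    · exact hlt
    · exfalso
      have : θ0 = 0 := hh.2.2 θ0 heq.symm
      rw [this] at hθ0norm; simp at hθ0norm
  refine ⟨h θ0, hc, fun θ => ?_⟩
  rcases eq_or_ne θ 0 with rfl | hθ
  · simp [h_zero hh, h_nonneg hh]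
  · have hn0 : ‖θ‖ ≠ 0 := norm_ne_zero_iff.2 hθ
    have hmem : ‖θ‖⁻¹ • θ ∈ Metric.sphere (0 : Fin m → ℝ) 1 := by
      simp [norm_smul, abs_of_nonneg (inv_nonneg.2 (norm_nonneg θ)), inv_mul_cancel₀ hn0]
    have heq : h (‖θ‖⁻¹ • θ) = ‖θ‖⁻¹ * h θ := by
      rw [hh.2.1]; congr 1
      exact abs_of_nonneg (inv_nonneg.2 (norm_nonneg θ))
    have hmin : h θ0 ≤ ‖θ‖⁻¹ * h θ := heq ▸ hθ0min hmem
    have hpos : 0 < ‖θ‖ := lt_of_le_of_ne (norm_nonneg θ) (Ne.symm hn0)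
    calc h θ0 * ‖θ‖ ≤ (‖θ‖⁻¹ * h θ) * ‖θ‖ :=
          mul_le_mul_of_nonneg_right hmin (norm_nonneg θ)
      _ = h θ := by field_simp

section duallemmas
variable {m n : ℕ} {h : (Fin m → ℝ) → ℝ}

lemma dual_nonempty (hh : IsNorm h) (g : Fin m → ℝ) :
    (0:ℝ) ∈ {r | ∃ θ : Fin m → ℝ, h θ ≤ 1 ∧ r = ∑ i, g i * θ i} :=
  ⟨0, by simp [h_zero hh], by simp⟩

lemma dual_bddAbove (hm : 0 < m) (hh : IsNorm h) (g : Fin m → ℝ) :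
    BddAbove {r | ∃ θ : Fin m → ℝ, h θ ≤ 1 ∧ r = ∑ i, g i * θ i} := by
  obtain ⟨c, hc, hl⟩ := h_lower hm hh
  refine ⟨(∑ i, |g i|) * c⁻¹, ?_⟩
  rintro r ⟨θ, hθ, rfl⟩
  have hθn : ‖θ‖ ≤ c⁻¹ := by
    have := le_trans (hl θ) hθ
    have h2 : c * ‖θ‖ ≤ c * c⁻¹ := by rw [mul_inv_cancel₀ hc.ne']; exact this
    exact le_of_mul_le_mul_left h2 hc
  calc ∑ i, g i * θ i ≤ ∑ i, |g i| * c⁻¹ := by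
        apply Finset.sum_le_sum
        intro i _
        calc g i * θ i ≤ |g i * θ i| := le_abs_self _
          _ = |g i| * |θ i| := abs_mul _ _
          _ ≤ |g i| * c⁻¹ :=
            mul_le_mul_of_nonneg_left (le_trans (by simpa using norm_le_pi_norm θ i) hθn)
              (abs_nonneg _)
    _ = (∑ i, |g i|) * c⁻¹ := (Finset.sum_mul _ _ _).symm

lemma dual_pair (hm : 0 < m) (hh : IsNorm h) {g : Fin m → ℝ}
    (hg : dualNorm h g ≤ 1) (θ : Fin m → ℝ) : ∑ i, g i * θ i ≤ h θ := by
  rcases (h_nonneg hh θ).eq_or_lt with heq | hpos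
  · have : θ = 0 := hh.2.2 θ heq.symm
    subst this; simp [← heq]
  · have key : ∑ i, g i * ((h θ)⁻¹ • θ) i ≤ 1 := by
      refine le_trans (le_csSup (dual_bddAbove hm hh g) ?_) hg
      refine ⟨(h θ)⁻¹ • θ, ?_, rfl⟩
      rw [hh.2.1, abs_of_nonneg (inv_nonneg.2 hpos.le), inv_mul_cancel₀ hpos.ne']
    have hsum : ∑ i, g i * ((h θ)⁻¹ • θ) i = (h θ)⁻¹ * ∑ i, g i * θ i := by
      rw [Finset.mul_sum]
      exact Finset.sum_congr rfl fun i _ => by simp [Pi.smul_apply, smul_eq_mul]; ring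
    rw [hsum] at key
    calc ∑ i, g i * θ i = h θ * ((h θ)⁻¹ * ∑ i, g i * θ i) := by field_simp
      _ ≤ h θ * 1 := mul_le_mul_of_nonneg_left key hpos.le
      _ = h θ := mul_one _

end duallemmas

section froblemmas
variable {m n : ℕ} {h : (Fin m → ℝ) → ℝ}

lemma frob_outer (M' : Fin m → Fin n → ℝ) (θ : Fin m → ℝ) (e : Euc n) :
    frob M' (outer θ e) = ∑ i, matVec M' e i * θ i := by
  unfold frob outer matVec
  refine Finset.sum_congr rfl fun i _ => ?_
  rw [Finset.sum_mul]
  exact Finset.sum_congr rfl fun j _ => by ring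

lemma frob_sum {k : ℕ} (A : Fin m → Fin n → ℝ) (B : Fin k → Fin m → Fin n → ℝ) :
    frob A (∑ a, B a) = ∑ a, frob A (B a) := by
  unfold frob
  simp only [Finset.sum_apply, Finset.mul_sum]
  have h1 : ∀ i : Fin m, ∑ j, ∑ a, A i j * B a i j = ∑ a, ∑ j, A i j * B a i j :=
    fun i => Finset.sum_comm
  simp only [h1]
  exact Finset.sum_comm

lemma pairing_le (hm : 0 < m) (hh : IsNorm h) {M' : Fin m → Fin n → ℝ}
    (hM' : inSubdiffH h M') {k : ℕ} {θ : Fin k → Fin m → ℝ} {e : Fin k → Euc n}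
    (he : ∀ a, ‖e a‖ = 1) :
    frob M' (∑ a, outer (θ a) (e a)) ≤ ∑ a, h (θ a) := by
  rw [frob_sum]
  refine Finset.sum_le_sum fun a _ => ?_
  rw [frob_outer]
  exact dual_pair hm hh (hM' (e a) (le_of_eq (he a))) (θ a)

lemma zero_inSubdiffH (hh : IsNorm h) : inSubdiffH (n := n) h 0 := by
  intro u _
  refine csSup_le ⟨0, dual_nonempty hh _⟩ ?_
  rintro r ⟨θ, hθ, rfl⟩
  simp [matVec]

lemma canonical_decomp (Z : Fin m → Fin n → ℝ) :
    Z = ∑ j, outer (fun i => Z i j) (EuclideanSpace.single j (1:ℝ)) := by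
  funext i j'
  simp only [Finset.sum_apply, outer, EuclideanSpace.single_apply]
  simp [mul_ite]

lemma single_norm_one (j : Fin n) : ‖(EuclideanSpace.single j (1:ℝ) : Euc n)‖ = 1 := by
  rw [EuclideanSpace.norm_single]
  norm_num

def decompSet {m n : ℕ} (h : (Fin m → ℝ) → ℝ) (M : Fin m → Fin n → ℝ) : Set ℝ :=
  {r | ∃ (k : ℕ) (θ : Fin k → Fin m → ℝ) (e : Fin k → Euc n),
    (∀ a, ‖e a‖ = 1) ∧ M = ∑ a, outer (θ a) (e a) ∧ r = ∑ a, h (θ a)}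

lemma decomp_add {M1 M2 : Fin m → Fin n → ℝ} {r1 r2 : ℝ}
    (h1 : r1 ∈ decompSet h M1) (h2 : r2 ∈ decompSet h M2) :
    r1 + r2 ∈ decompSet h (M1 + M2) := by
  obtain ⟨k1, θ1, e1, he1, hM1, hr1⟩ := h1
  obtain ⟨k2, θ2, e2, he2, hM2, hr2⟩ := h2
  refine ⟨k1 + k2, Fin.append θ1 θ2, Fin.append e1 e2, ?_, ?_, ?_⟩
  · intro a
    refine Fin.addCases (fun i => ?_) (fun i => ?_) a
    · rw [Fin.append_left]; exact he1 i
    · rw [Fin.append_right]; exact he2 i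
  · rw [Fin.sum_univ_add]
    simp only [Fin.append_left, Fin.append_right]
    rw [← hM1, ← hM2]
  · rw [Fin.sum_univ_add]
    simp only [Fin.append_left, Fin.append_right]
    rw [← hr1, ← hr2]

lemma f_repr (f : (Fin m → Fin n → ℝ) →L[ℝ] ℝ) (X : Fin m → Fin n → ℝ) :
    f X = ∑ i, ∑ j, X i j * f (Pi.single i (Pi.single j 1)) := by
  have hX : X = ∑ i, ∑ j, X i j • (Pi.single i (Pi.single j (1:ℝ)) : Fin m → Fin n → ℝ) := by
    funext i' j'
    simp [Finset.sum_apply, Pi.single_apply, ite_apply, mul_ite,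
      Finset.sum_ite_eq, Finset.sum_ite_eq']
  conv_lhs => rw [hX]
  rw [map_sum]
  refine Finset.sum_congr rfl fun i _ => ?_
  rw [map_sum]
  exact Finset.sum_congr rfl fun j _ => by rw [_root_.map_smul, smul_eq_mul]

end froblemmas

section hull
variable {m n : ℕ} {h : (Fin m → ℝ) → ℝ}

lemma hull_decomp (hh : IsNorm h) {Y : Fin m → Fin n → ℝ} {c' : ℝ} (hc' : 0 < c')
    (hY : Y ∈ convexHull ℝ {A : Fin m → Fin n → ℝ |
      ∃ θ e, h θ ≤ 1 ∧ ‖e‖ = 1 ∧ A = outer θ e}) :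
    ∃ r ∈ decompSet h (c' • Y), r ≤ c' := by
  classical
  rw [convexHull_eq] at hY
  obtain ⟨ι, t, w, z, hw0, hw1, hz, hcm⟩ := hY
  rw [Finset.centerMass_eq_of_sum_1 _ _ hw1] at hcm
  have hz' : ∀ x : {i // i ∈ t}, ∃ θ e, h θ ≤ 1 ∧ ‖e‖ = 1 ∧ z x = outer θ e :=
    fun x => hz x x.2
  choose θf ef hθf hef hzf using hz'
  set k := t.card with hk
  set eqv := t.equivFin with heqv
  refine ⟨∑ a : Fin k, h ((c' * w (eqv.symm a)) • θf (eqv.symm a)),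
    ⟨k, fun a => (c' * w (eqv.symm a)) • θf (eqv.symm a), fun a => ef (eqv.symm a),
      fun a => hef _, ?_, rfl⟩, ?_⟩
  · have houter : ∀ x : {i // i ∈ t},
        outer ((c' * w x) • θf x) (ef x) = (c' * w (x : ι)) • z x := by
      intro x
      rw [hzf]
      funext i j
      simp only [outer, Pi.smul_apply, smul_eq_mul]
      ring
    calc c' • Y = c' • ∑ i ∈ t, w i • z i := by rw [hcm]
      _ = ∑ i ∈ t, (c' * w i) • z i := by
          rw [Finset.smul_sum]
          exact Finset.sum_congr rfl fun i _ => smul_smul _ _ _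
      _ = ∑ x : {i // i ∈ t}, (c' * w (x : ι)) • z x := (Finset.sum_coe_sort _ _).symm
      _ = ∑ a : Fin k, (c' * w ((eqv.symm a : {i // i ∈ t}) : ι)) • z (eqv.symm a) :=
          (Equiv.sum_comp eqv.symm _).symm
      _ = ∑ a : Fin k, outer ((c' * w (eqv.symm a)) • θf (eqv.symm a)) (ef (eqv.symm a)) := by
          exact Finset.sum_congr rfl fun a _ => (houter _).symm
  · calc ∑ a : Fin k, h ((c' * w (eqv.symm a)) • θf (eqv.symm a))
        ≤ ∑ a : Fin k, c' * w (eqv.symm a) := by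
          refine Finset.sum_le_sum fun a _ => ?_
          rw [hh.2.1, abs_of_nonneg (mul_nonneg hc'.le (hw0 _ (eqv.symm a).2))]
          calc c' * w (eqv.symm a) * h (θf (eqv.symm a)) ≤ c' * w (eqv.symm a) * 1 :=
                mul_le_mul_of_nonneg_left (hθf _) (mul_nonneg hc'.le (hw0 _ (eqv.symm a).2))
            _ = c' * w (eqv.symm a) := mul_one _
      _ = c' * ∑ a : Fin k, w ((eqv.symm a : {i // i ∈ t}) : ι) := by rw [Finset.mul_sum]
      _ = c' * ∑ x : {i // i ∈ t}, w (x : ι) :=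
          congrArg (c' * ·) (Equiv.sum_comp eqv.symm fun x : {i // i ∈ t} => w (x : ι))
      _ = c' * ∑ i ∈ t, w i := by rw [Finset.sum_coe_sort]
      _ = c' := by rw [hw1, mul_one]

end hull

/-- `H(M)` is the infimum of `Σ h(θ_a)` over finite rank-one
decompositions `M = Σ θ_a ⊗ e_a` with unit vectors `e_a`. -/
theorem statement2 {m n : ℕ} (hm : 0 < m) (hn : 0 < n)
    (h : (Fin m → ℝ) → ℝ) (hh : IsNorm h) :
    ∀ M : Fin m → Fin n → ℝ,
      genNorm h M = sInf {r | ∃ (k : ℕ) (θ : Fin k → Fin m → ℝ) (e : Fin k → Euc n),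
        (∀ a, ‖e a‖ = 1) ∧ M = ∑ a, outer (θ a) (e a) ∧ r = ∑ a, h (θ a)} := by
  intro M
  classical
  obtain ⟨C, hC0, hC⟩ := h_upper hh
  have hset : {r | ∃ (k : ℕ) (θ : Fin k → Fin m → ℝ) (e : Fin k → Euc n),
      (∀ a, ‖e a‖ = 1) ∧ M = ∑ a, outer (θ a) (e a) ∧ r = ∑ a, h (θ a)} = decompSet h M := rfl
  rw [hset]
  have hcan : ∀ Z : Fin m → Fin n → ℝ, (∑ j, h (fun i => Z i j)) ∈ decompSet h Z :=
    fun Z => ⟨n, fun j => fun i => Z i j, fun j => EuclideanSpace.single j 1,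
      fun j => single_norm_one j, canonical_decomp Z, rfl⟩
  have hSne : (decompSet h M).Nonempty := ⟨_, hcan M⟩
  have hSbdd : BddBelow (decompSet h M) := by
    refine ⟨0, ?_⟩
    rintro r ⟨k, θ, e, he, hMe, rfl⟩
    exact Finset.sum_nonneg fun a _ => h_nonneg hh _
  set G := {r | ∃ M' : Fin m → Fin n → ℝ, inSubdiffH h M' ∧ r = frob M' M} with hGdef
  have hGne : (0:ℝ) ∈ G := ⟨0, zero_inSubdiffH hh, by simp [frob]⟩
  have hGle : ∀ r ∈ G, ∀ s ∈ decompSet h M, r ≤ s := by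
    rintro r ⟨M', hM', rfl⟩ s ⟨k, θ, e, he, hMd, rfl⟩
    rw [hMd]
    exact pairing_le hm hh hM' he
  have hGbdd : BddAbove G := ⟨∑ j, h (fun i => M i j),
    fun r hr => hGle r hr _ (hcan M)⟩
  have hgen : genNorm h M = sSup G := rfl
  have hGnonneg : 0 ≤ genNorm h M := by rw [hgen]; exact le_csSup hGbdd hGne
  apply le_antisymm
  · rw [hgen]
    exact csSup_le ⟨0, hGne⟩ fun r hr => le_csInf hSne (hGle r hr)
  · refine le_of_forall_gt_imp_ge_of_dense fun c' hc' => ?_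
    have hc'pos : 0 < c' := lt_of_le_of_lt hGnonneg hc'
    set K := {A : Fin m → Fin n → ℝ | ∃ θ e, h θ ≤ 1 ∧ ‖e‖ = 1 ∧ A = outer θ e} with hKdef
    have h0K : (0 : Fin m → Fin n → ℝ) ∈ K :=
      ⟨0, EuclideanSpace.single ⟨0, hn⟩ 1, by simp [h_zero hh], single_norm_one _,
        by funext i j; simp [outer]⟩
    set X := c'⁻¹ • M with hXdef
    have hMX : M = c' • X := by
      rw [hXdef, smul_smul, mul_inv_cancel₀ hc'pos.ne', one_smul]
    have hXmem : X ∈ closure (convexHull ℝ K) := by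
      by_contra hX
      obtain ⟨f, u, hfu, hux⟩ := geometric_hahn_banach_closed_point
        ((convex_convexHull ℝ K).closure) isClosed_closure hX
      have hu : 0 < u := by
        have := hfu 0 (subset_closure (subset_convexHull ℝ K h0K))
        simpa using this
      set M'' : Fin m → Fin n → ℝ := fun i j => f (Pi.single i (Pi.single j 1)) / u with hM''
      have hfrob : ∀ A, frob M'' A = f A / u := by
        intro A
        rw [f_repr f A]
        unfold frob
        rw [Finset.sum_div]
        refine Finset.sum_congr rfl fun i _ => ?_
        rw [Finset.sum_div]
        refine Finset.sum_congr rfl fun j _ => ?_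
        rw [hM'']
        ring
      have hsub : inSubdiffH h M'' := by
        intro v hv
        refine csSup_le ⟨0, dual_nonempty hh _⟩ ?_
        rintro r ⟨θ, hθ, rfl⟩
        have key : ∑ i, matVec M'' v i * θ i = frob M'' (outer θ v) := (frob_outer _ _ _).symm
        rw [key, hfrob, div_le_one hu]
        rcases eq_or_ne v 0 with rfl | hv0
        · have h0 : outer θ (0 : Euc n) = 0 := by funext i j; simp [outer]
          rw [h0, map_zero]; exact hu.le
        · have hvn : 0 < ‖v‖ := norm_pos_iff.2 hv0
          have hdecomp : outer θ v = ‖v‖ • outer θ (‖v‖⁻¹ • v) := by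
            funext i j
            simp only [outer, Pi.smul_apply, smul_eq_mul, PiLp.smul_apply]
            field_simp
          have hmemK : outer θ (‖v‖⁻¹ • v) ∈ K := by
            refine ⟨θ, ‖v‖⁻¹ • v, hθ, ?_, rfl⟩
            rw [norm_smul, norm_inv, norm_norm, inv_mul_cancel₀ hvn.ne']
          have hlt : f (outer θ (‖v‖⁻¹ • v)) < u :=
            hfu _ (subset_closure (subset_convexHull ℝ K hmemK))
          rw [hdecomp, _root_.map_smul, smul_eq_mul]
          rcases le_or_gt (f (outer θ (‖v‖⁻¹ • v))) 0 with hf0 | hf0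
          · exact le_trans (mul_nonpos_of_nonneg_of_nonpos (norm_nonneg v) hf0) hu.le
          · calc ‖v‖ * f (outer θ (‖v‖⁻¹ • v)) ≤ 1 * f (outer θ (‖v‖⁻¹ • v)) :=
                mul_le_mul_of_nonneg_right hv hf0.le
              _ ≤ u := by rw [one_mul]; exact hlt.le
      have hmemG : frob M'' M ∈ G := ⟨M'', hsub, rfl⟩
      have h1 : frob M'' M ≤ genNorm h M := by rw [hgen]; exact le_csSup hGbdd hmemG
      have hfM : f M = c' * f X := by
        rw [hMX, _root_.map_smul, smul_eq_mul]
      have h2 : c' < frob M'' M := by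
        rw [hfrob, hfM, lt_div_iff₀ hu]
        exact mul_lt_mul_of_pos_left hux hc'pos
      linarith
    refine le_of_forall_gt_imp_ge_of_dense fun b hb => ?_
    have hden : 0 < c' * ((n : ℝ) * C + 1) := by positivity
    set ε := (b - c') / (c' * ((n : ℝ) * C + 1)) with hε
    have hεpos : 0 < ε := div_pos (by linarith) hden
    obtain ⟨Y, hY, hdist⟩ := Metric.mem_closure_iff.1 hXmem ε hεpos
    obtain ⟨r1, hr1mem, hr1⟩ := hull_decomp hh hc'pos hY
    set Z := M - c' • Y with hZdef
    have hZnorm : ‖Z‖ ≤ c' * dist X Y := by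
      rw [hZdef, hMX, ← smul_sub, norm_smul, Real.norm_eq_abs, abs_of_pos hc'pos, dist_eq_norm]
    have hZcol : ∀ j : Fin n, ‖fun i => Z i j‖ ≤ ‖Z‖ := by
      intro j
      rw [pi_norm_le_iff_of_nonneg (norm_nonneg Z)]
      intro i
      exact le_trans (norm_le_pi_norm (Z i) j) (norm_le_pi_norm Z i)
    have hr2 : (∑ j, h (fun i => Z i j)) ≤ (n : ℝ) * C * (c' * ε) := by
      calc (∑ j, h (fun i => Z i j)) ≤ ∑ j : Fin n, C * (c' * ε) := by
            refine Finset.sum_le_sum fun j _ => ?_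
            calc h (fun i => Z i j) ≤ C * ‖fun i => Z i j‖ := hC _
              _ ≤ C * (c' * ε) := by
                  refine mul_le_mul_of_nonneg_left ?_ hC0
                  exact le_trans (hZcol j) (le_trans hZnorm
                    (mul_le_mul_of_nonneg_left hdist.le hc'pos.le))
        _ = (n : ℝ) * (C * (c' * ε)) := by rw [Finset.sum_const, Finset.card_univ]; simp
        _ = (n : ℝ) * C * (c' * ε) := by ring
    have hmem : r1 + (∑ j, h (fun i => Z i j)) ∈ decompSet h M := by
      have := decomp_add hr1mem (hcan Z)
      have hMZ : c' • Y + Z = M := by rw [hZdef]; abel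
      rwa [hMZ] at this
    have hεb : (n : ℝ) * C * (c' * ε) ≤ b - c' := by
      rw [hε, div_eq_inv_mul]
      have key : (n : ℝ) * C * c' * (c' * ((n : ℝ) * C + 1))⁻¹ ≤ 1 := by
        rw [mul_inv_le_iff₀ hden, one_mul]
        nlinarith [hC0, Nat.cast_nonneg (α := ℝ) n]
      have expand : (n : ℝ) * C * (c' * ((c' * ((n : ℝ) * C + 1))⁻¹ * (b - c')))
          = ((n : ℝ) * C * c' * (c' * ((n : ℝ) * C + 1))⁻¹) * (b - c') := by ring
      rw [expand]
      calc ((n : ℝ) * C * c' * (c' * ((n : ℝ) * C + 1))⁻¹) * (b - c')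
          ≤ 1 * (b - c') := mul_le_mul_of_nonneg_right key (by linarith)
        _ = b - c' := one_mul _
    calc sInf (decompSet h M) ≤ r1 + (∑ j, h (fun i => Z i j)) := csInf_le hSbdd hmem
      _ ≤ c' + (b - c') := add_le_add hr1 (le_trans hr2 hεb)
      _ = b := by ring
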